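/- Every connected loop diagram has exactly one independent cycle (first Betti number 1): it consists of a single cycle whose interaction vertices are all of one type T among {B,A,A}, {A,cbar,c}, {A,ψ,χbar}, {A,φbar,φ} joined by propagators of the corresponding single type, each cycle vertex carrying exactly one remaining half-edge labeled A, and these A-legs are completed by acyclic trees of {B,A,A} vertices joined by {A,B} propagators, with all remaining half-edges matched to external vertices labeled B or b. -/

import Mathlib

/-!  Feynman-diagram combinatorics of 4D topological Yang–Mills theory
in the (anti-)self-dual Landau gauges. -/

/-- The ten field labels. -/
inductive Fld : Type
  | A | psi | chibar | c | cbar | phi | phibar | etabar | B | b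
  deriving DecidableEq

/-- The seven allowed interaction-vertex types (multisets of labels). -/
def vertexTypes : List (Multiset Fld) :=
  [ {Fld.B, Fld.A, Fld.A}
  , {Fld.chibar, Fld.A, Fld.c}
  , {Fld.A, Fld.psi, Fld.chibar}
  , {Fld.A, Fld.cbar, Fld.c}
  , {Fld.A, Fld.phibar, Fld.phi}
  , {Fld.phibar, Fld.c, Fld.psi}
  , {Fld.chibar, Fld.c, Fld.A, Fld.A} ]

/-- The six allowed propagator types (unordered pairs of labels). -/
def propTypes : List (Multiset Fld) :=
  [ {Fld.c, Fld.cbar}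
  , {Fld.chibar, Fld.psi}
  , {Fld.etabar, Fld.psi}
  , {Fld.phi, Fld.phibar}
  , {Fld.A, Fld.B}
  , {Fld.A, Fld.b} ]

/-- A Feynman diagram: a finite set `H` of half-edges labelled by fields,
partitioned into vertices (the fibers of `vtx`), each vertex being an
interaction vertex of one of the seven allowed types or an external vertex
(a single half-edge), together with a perfect matching `mu` whose matched
pairs realize one of the six allowed propagator types. -/
structure Diagram where
  H : Type
  V : Type
  [fintypeH : Fintype H]
  [decEqH : DecidableEq H]
  [fintypeV : Fintype V]
  [decEqV : DecidableEq V]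
  vtx : H → V
  vtx_surj : Function.Surjective vtx
  lab : H → Fld
  mu : H → H
  mu_invol : Function.Involutive mu
  mu_ne : ∀ h, mu h ≠ h
  prop_ok : ∀ h, ({lab h, lab (mu h)} : Multiset Fld) ∈ propTypes
  vtx_ok : ∀ v : V,
      ((Finset.univ.filter (fun h => vtx h = v)).val.map lab) ∈ vertexTypes
      ∨ ∃ h, Finset.univ.filter (fun h' => vtx h' = v) = {h}

attribute [instance] Diagram.fintypeH Diagram.decEqH Diagram.fintypeV Diagram.decEqV

namespace Diagram

variable (D : Diagram)

/-- The set of half-edges belonging to a vertex. -/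
def fiber (v : D.V) : Finset D.H := Finset.univ.filter (fun h => D.vtx h = v)

/-- The multiset of field labels carried by a vertex. -/
def labels (v : D.V) : Multiset Fld := (D.fiber v).val.map D.lab

/-- An external vertex: a single half-edge (an external leg). -/
def IsExternal (v : D.V) : Prop := ∃ h, D.fiber v = {h}

/-- An interaction vertex: its labels form one of the seven allowed types. -/
def IsInteraction (v : D.V) : Prop := D.labels v ∈ vertexTypes

/-- Adjacency of the multigraph of the diagram. -/
def Adj (v w : D.V) : Prop := ∃ h, D.vtx h = v ∧ D.vtx (D.mu h) = w

/-- Connectedness of the multigraph of the diagram. -/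
def Connected : Prop := ∀ v w : D.V, Relation.ReflTransGen D.Adj v w

/-- A cycle of the multigraph: a closed walk `e 0, e 1, …, e (n-1)` of
half-edges (each matched pair `{e i, mu (e i)}` being the traversed edge),
of positive length, with pairwise distinct edges and pairwise distinct
vertices. -/
structure Cycle where
  n : ℕ
  npos : 0 < n
  e : ZMod n → D.H
  step : ∀ i, D.vtx (D.mu (e i)) = D.vtx (e (i + 1))
  edges_distinct : ∀ i j, i ≠ j → e i ≠ e j ∧ e i ≠ D.mu (e j)
  vtx_inj : Function.Injective fun i => D.vtx (e i)

/-- A loop diagram: the multigraph contains a cycle. -/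
def IsLoopDiagram : Prop := Nonempty D.Cycle

end Diagram
instance : Fintype Fld :=
  ⟨⟨[Fld.A, Fld.psi, Fld.chibar, Fld.c, Fld.cbar, Fld.phi, Fld.phibar,
     Fld.etabar, Fld.B, Fld.b], by decide⟩, fun x => by cases x <;> decide⟩

namespace Diagram

open Finset

variable (D : Diagram)

lemma mem_fiber {D : Diagram} {h : D.H} {v : D.V} : h ∈ D.fiber v ↔ D.vtx h = v := by
  simp [fiber]

lemma self_mem_fiber {D : Diagram} (h : D.H) : h ∈ D.fiber (D.vtx h) := mem_fiber.2 rfl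

lemma lab_mem_labels {D : Diagram} (h : D.H) : D.lab h ∈ D.labels (D.vtx h) := by
  simp only [labels, Multiset.mem_map]
  exact ⟨h, by simpa using self_mem_fiber h, rfl⟩

lemma card_fiber_eq {D : Diagram} (v : D.V) :
    (D.fiber v).card = Multiset.card (D.labels v) := by
  rw [labels, Multiset.card_map]
  rfl

lemma count_labels {D : Diagram} (v : D.V) (a : Fld) :
    Multiset.count a (D.labels v) = ((D.fiber v).filter (fun h => D.lab h = a)).card := by
  simp only [labels, Multiset.count_map, Finset.filter, Finset.card]
  congr 1
  exact Multiset.filter_congr (fun x _ => by constructor <;> exact fun h => h.symm)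

/-- Uniqueness of a half-edge with a given label at a vertex whose label-count is 1. -/
lemma unique_of_count_one {D : Diagram} {v : D.V} {a : Fld}
    (hc : Multiset.count a (D.labels v) = 1) :
    ∀ h h', h ∈ D.fiber v → h' ∈ D.fiber v → D.lab h = a → D.lab h' = a → h = h' := by
  intro h h' hh hh' hl hl'
  rw [count_labels] at hc
  have := Finset.card_le_one.1 hc.le
  exact this h (Finset.mem_filter.2 ⟨hh, hl⟩) h' (Finset.mem_filter.2 ⟨hh', hl'⟩)

lemma exists_of_mem_labels {D : Diagram} {v : D.V} {a : Fld}
    (ha : a ∈ D.labels v) : ∃ h, h ∈ D.fiber v ∧ D.lab h = a := by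
  simp only [labels, Multiset.mem_map] at ha
  obtain ⟨h, hh, hl⟩ := ha
  exact ⟨h, hh, hl⟩

/-- weighted label sum at a vertex -/
def W (q : Fld → ℤ) (v : D.V) : ℤ := ((D.labels v).map q).sum

lemma sum_W (q : Fld → ℤ) (hq : ∀ p ∈ propTypes, (p.map q).sum = 0) :
    ∑ v : D.V, D.W q v = 0 := by
  have key : ∀ h, q (D.lab h) + q (D.lab (D.mu h)) = 0 := by
    intro h
    have h2 := hq _ (D.prop_ok h)
    simpa using h2
  have h1 : ∑ v : D.V, D.W q v = ∑ h : D.H, q (D.lab h) := by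
    rw [← Finset.sum_fiberwise Finset.univ D.vtx (fun h => q (D.lab h))]
    refine Finset.sum_congr rfl (fun v _ => ?_)
    simp only [W, labels, Multiset.map_map]
    rfl
  have h2 : ∑ h : D.H, q (D.lab h) = ∑ h : D.H, q (D.lab (D.mu h)) :=
    (Fintype.sum_bijective D.mu D.mu_invol.bijective
      (fun h => q (D.lab (D.mu h))) (fun h => q (D.lab h)) (fun h => rfl)).symm
  have h3 : (2:ℤ) * ∑ h : D.H, q (D.lab h) = 0 := by
    rw [two_mul]
    nth_rewrite 2 [h2]
    rw [← Finset.sum_add_distrib]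
    exact Finset.sum_eq_zero (fun h _ => key h)
  rw [h1]
  omega

lemma card_H_eq_sum {D : Diagram} :
    Fintype.card D.H = ∑ v : D.V, (D.fiber v).card := by
  exact Finset.card_eq_sum_card_fiberwise (f := D.vtx) (fun h _ => Finset.mem_univ _)

end Diagram
namespace Diagram

open Finset

/-- Adjacency restricted to an allowed set of half-edges. -/
def AdjOk (D : Diagram) (ok : D.H → Prop) (v w : D.V) : Prop :=
  ∃ h, ok h ∧ D.vtx h = v ∧ D.vtx (D.mu h) = w

/-- `n`-step reachability to `r`. -/
def ReachN (D : Diagram) (ok : D.H → Prop) (r : D.V) : ℕ → D.V → Prop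
  | 0, v => v = r
  | n+1, v => ∃ u, AdjOk D ok v u ∧ ReachN D ok r n u

/-- The unordered pair of a matched pair of half-edges. -/
def edgeS (D : Diagram) (h : D.H) : Finset D.H := {h, D.mu h}

lemma mem_edgeS {D : Diagram} {h h' : D.H} : h' ∈ D.edgeS h ↔ h' = h ∨ h' = D.mu h := by
  simp [edgeS]

lemma self_mem_edgeS (D : Diagram) (h : D.H) : h ∈ D.edgeS h := mem_edgeS.2 (Or.inl rfl)

lemma edgeS_mu (D : Diagram) (h : D.H) : D.edgeS (D.mu h) = D.edgeS h := by
  rw [edgeS, edgeS, D.mu_invol h, Finset.pair_comm]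

lemma edgeS_eq_cases {D : Diagram} {h h' : D.H} (he : D.edgeS h = D.edgeS h') :
    h = h' ∨ h = D.mu h' := mem_edgeS.1 (he ▸ self_mem_edgeS D h)

lemma zmod_natCast_ne_zero {n k : ℕ} (h1 : 0 < k) (h2 : k < n) : ((k : ZMod n)) ≠ 0 := by
  have : NeZero n := ⟨by omega⟩
  intro h
  have := congrArg ZMod.val h
  rw [ZMod.val_natCast, ZMod.val_zero, Nat.mod_eq_of_lt h2] at this
  omega

/-- Key bound: a connected graph containing a cycle (within an allowed,
matching-closed set of half-edges) has at least as many edges as vertices. -/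
lemma graph_bound (D : Diagram) (ok : D.H → Prop) [DecidablePred ok]
    (hmu : ∀ h, ok h → ok (D.mu h))
    (C : D.Cycle) (hCok : ∀ i, ok (C.e i))
    (hconn : ∀ v w, Relation.ReflTransGen (AdjOk D ok) v w) :
    2 * Fintype.card D.V ≤ (Finset.univ.filter ok).card := by
  classical
  have hnz : NeZero C.n := ⟨C.npos.ne'⟩
  set r := D.vtx (C.e 0) with hr
  have hex : ∀ v : D.V, ∃ n, D.ReachN ok r n v := by
    intro v
    have h := hconn v r
    induction h using Relation.ReflTransGen.head_induction_on with
    | refl => exact ⟨0, rfl⟩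
    | head h' _ ih => obtain ⟨n, hn⟩ := ih; exact ⟨n+1, _, h', hn⟩
  have hdex : ∀ v, ∃ n, D.ReachN ok r n v ∧ ∀ m, D.ReachN ok r m v → n ≤ m :=
    fun v => ⟨Nat.find (hex v), Nat.find_spec (hex v), fun m hm => Nat.find_min' (hex v) hm⟩
  choose d hd hdmin using hdex
  have hstep : ∀ v, ∃ h, v ≠ r → (ok h ∧ D.vtx h = v ∧ d (D.vtx (D.mu h)) < d v) := by
    intro v
    by_cases hv : v = r
    · exact ⟨C.e 0, fun h => absurd hv h⟩
    · have hspec := hd v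
      have hdv : d v ≠ 0 := by
        intro h0
        rw [h0] at hspec
        exact hv hspec
      obtain ⟨m, hm⟩ := Nat.exists_eq_succ_of_ne_zero hdv
      rw [hm] at hspec
      obtain ⟨u, ⟨h, hok, hvtx, hmuv⟩, hru⟩ := hspec
      refine ⟨h, fun _ => ⟨hok, hvtx, ?_⟩⟩
      rw [hmuv, hm]
      exact Nat.lt_succ_of_le (hdmin u m hru)
  choose f hf using hstep
  have hfinj : ∀ v w, v ≠ r → w ≠ r → D.edgeS (f v) = D.edgeS (f w) → v = w := by
    intro v w hv hw he
    obtain ⟨hokv, hvtxv, hltv⟩ := hf v hv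
    obtain ⟨hokw, hvtxw, hltw⟩ := hf w hw
    rcases edgeS_eq_cases he with h1 | h1
    · rw [← hvtxv, ← hvtxw, h1]
    · exfalso
      have h2 : D.mu (f v) = f w := by rw [h1, D.mu_invol]
      have h3 : d w < d v := by rw [← hvtxw, ← h2]; exact hltv
      have h4 : d v < d w := by
        have : D.mu (f w) = f v := by rw [← h2, D.mu_invol]
        rw [← hvtxv, ← this]; exact hltw
      omega
  have hMiss : ∃ i, ∀ v, v ≠ r → D.edgeS (f v) ≠ D.edgeS (C.e i) := by
    by_contra hmiss
    push_neg at hmiss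
    choose w hw hwe using hmiss
    set σ : ZMod C.n → ZMod C.n := fun i => if f (w i) = C.e i then i else i + 1 with hσ
    have hσv : ∀ i, D.vtx (C.e (σ i)) = w i := by
      intro i
      by_cases hcase : f (w i) = C.e i
      · simp only [hσ, if_pos hcase]
        rw [← hcase]
        exact (hf (w i) (hw i)).2.1
      · simp only [hσ, if_neg hcase]
        have hmem : f (w i) ∈ D.edgeS (C.e i) := by
          rw [← hwe i]; exact self_mem_edgeS D _
        rcases mem_edgeS.1 hmem with h1 | h1
        · exact absurd h1 hcase
        · rw [← C.step i, ← h1]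
          exact (hf (w i) (hw i)).2.1
    have hσ0 : ∀ i, σ i ≠ 0 := by
      intro i h
      exact hw i (by rw [← hσv i, h, hr])
    have hσinj : Function.Injective σ := by
      intro i j hij
      have hwij : w i = w j := by rw [← hσv i, ← hσv j, hij]
      have heq : D.edgeS (C.e i) = D.edgeS (C.e j) := by rw [← hwe i, ← hwe j, hwij]
      by_contra hne
      rcases edgeS_eq_cases heq with h1 | h1
      · exact (C.edges_distinct i j hne).1 h1
      · exact (C.edges_distinct i j hne).2 h1
    have hcard := Fintype.card_le_of_injective
      (fun i => (⟨σ i, hσ0 i⟩ : {j : ZMod C.n // j ≠ 0}))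
      (fun i j hij => hσinj (congrArg Subtype.val hij))
    have h1 : Fintype.card {j : ZMod C.n // j ≠ 0} = C.n - 1 := by
      have := Fintype.card_subtype_compl (fun j : ZMod C.n => j = 0)
      rw [this, ZMod.card, Fintype.card_subtype_eq]
    rw [ZMod.card, h1] at hcard
    have hn := C.npos
    omega
  obtain ⟨i₀, hi₀⟩ := hMiss
  set F : D.V → Finset D.H := fun v => if v = r then D.edgeS (C.e i₀) else D.edgeS (f v) with hF
  have hFinj : Function.Injective F := by
    intro v w hvw
    by_cases hv : v = r <;> by_cases hw2 : w = r
    · rw [hv, hw2]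
    · exfalso; simp only [hF, if_pos hv, if_neg hw2] at hvw; exact hi₀ w hw2 hvw.symm
    · exfalso; simp only [hF, if_neg hv, if_pos hw2] at hvw; exact hi₀ v hv hvw
    · simp only [hF, if_neg hv, if_neg hw2] at hvw; exact hfinj v w hv hw2 hvw
  have hFmem : ∀ v, F v ∈ (Finset.univ.filter ok).image (D.edgeS) := by
    intro v
    by_cases hv : v = r
    · simp only [hF, if_pos hv]
      exact Finset.mem_image.2 ⟨C.e i₀, by simp [hCok i₀], rfl⟩
    · simp only [hF, if_neg hv]
      exact Finset.mem_image.2 ⟨f v, by simp [(hf v hv).1], rfl⟩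
  have hcard1 : Fintype.card D.V ≤ ((Finset.univ.filter ok).image (D.edgeS)).card := by
    rw [← Finset.card_univ]
    exact Finset.card_le_card_of_injOn F (fun v _ => hFmem v) hFinj.injOn
  have hcard2 : (Finset.univ.filter ok).card
      = 2 * ((Finset.univ.filter ok).image (D.edgeS)).card := by
    rw [Finset.card_eq_sum_card_image (D.edgeS) (Finset.univ.filter ok)]
    have hfib : ∀ b ∈ (Finset.univ.filter ok).image (D.edgeS),
        ((Finset.univ.filter ok).filter (fun h => D.edgeS h = b)).card = 2 := by
      intro b hb
      obtain ⟨h₀, hh₀, rfl⟩ := Finset.mem_image.1 hb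
      have hh₀ok : ok h₀ := (Finset.mem_filter.1 hh₀).2
      have hset : (Finset.univ.filter ok).filter (fun h => D.edgeS h = D.edgeS h₀)
          = {h₀, D.mu h₀} := by
        ext h
        simp only [Finset.mem_filter, Finset.mem_univ, true_and, Finset.mem_insert,
          Finset.mem_singleton]
        constructor
        · rintro ⟨_, he⟩; exact edgeS_eq_cases he
        · rintro (rfl | rfl)
          · exact ⟨hh₀ok, rfl⟩
          · exact ⟨hmu _ hh₀ok, edgeS_mu _ _⟩
      rw [hset, Finset.card_insert_of_notMem (by simp [Ne.symm (D.mu_ne h₀)]),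
        Finset.card_singleton]
    rw [Finset.sum_congr rfl hfib, Finset.sum_const, smul_eq_mul, mul_comm]
  omega

/-- A symmetric relation has symmetric reflexive-transitive closure. -/
lemma rtg_symm {α : Type*} {rel : α → α → Prop} (hs : Symmetric rel) {a b : α}
    (h : Relation.ReflTransGen rel a b) : Relation.ReflTransGen rel b a := by
  induction h with
  | refl => exact Relation.ReflTransGen.refl
  | tail _ h2 ih => exact Relation.ReflTransGen.trans (Relation.ReflTransGen.single (hs h2)) ih

/-- Removing one edge of a cycle keeps the diagram connected. -/
lemma detour (D : Diagram) (hconn : D.Connected) (Dc : D.Cycle) (v w : D.V) :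
    Relation.ReflTransGen (AdjOk D (fun h => h ≠ Dc.e 0 ∧ h ≠ D.mu (Dc.e 0))) v w := by
  classical
  have hnz : NeZero Dc.n := ⟨Dc.npos.ne'⟩
  set ok : D.H → Prop := fun h => h ≠ Dc.e 0 ∧ h ≠ D.mu (Dc.e 0) with hok
  have hsymm : Symmetric (AdjOk D ok) := by
    rintro a b ⟨h, ⟨h1, h2⟩, hva, hvb⟩
    refine ⟨D.mu h, ⟨?_, fun he => h1 (D.mu_invol.injective he)⟩, hvb, ?_⟩
    · intro he
      exact h2 (by rw [← he, D.mu_invol])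
    · rw [D.mu_invol]; exact hva
  have hpath : ∀ k : ℕ, k ≤ Dc.n - 1 →
      Relation.ReflTransGen (AdjOk D ok) (D.vtx (Dc.e 1))
        (D.vtx (Dc.e ((1 + k : ℕ) : ZMod Dc.n))) := by
    intro k
    induction k with
    | zero =>
      intro _
      have h10 : ((1 + 0 : ℕ) : ZMod Dc.n) = 1 := by norm_num
      rw [h10]
    | succ k ih =>
      intro hk
      have hn := Dc.npos
      refine Relation.ReflTransGen.tail (ih (by omega)) ?_
      refine ⟨Dc.e ((1 + k : ℕ) : ZMod Dc.n), ?_, rfl, ?_⟩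
      · have hne : ((1 + k : ℕ) : ZMod Dc.n) ≠ 0 :=
          zmod_natCast_ne_zero (by omega) (by omega)
        exact ⟨(Dc.edges_distinct _ 0 hne).1, (Dc.edges_distinct _ 0 hne).2⟩
      · rw [Dc.step]
        congr 1
        push_cast
        ring
  have hv1v0 : Relation.ReflTransGen (AdjOk D ok) (D.vtx (Dc.e 1)) (D.vtx (Dc.e 0)) := by
    have hn := Dc.npos
    have h1 := hpath (Dc.n - 1) le_rfl
    have h2 : ((1 + (Dc.n - 1) : ℕ) : ZMod Dc.n) = 0 := by
      have : (1 + (Dc.n - 1) : ℕ) = Dc.n := by omega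
      rw [this, ZMod.natCast_self]
    rwa [h2] at h1
  have hone : ∀ a b, D.Adj a b → Relation.ReflTransGen (AdjOk D ok) a b := by
    rintro a b ⟨h, hva, hvb⟩
    by_cases h1 : h = Dc.e 0
    · subst h1
      have hb : b = D.vtx (Dc.e 1) := by rw [← hvb, Dc.step 0, zero_add]
      have ha : a = D.vtx (Dc.e 0) := hva.symm
      rw [ha, hb]
      exact rtg_symm hsymm hv1v0
    · by_cases h2 : h = D.mu (Dc.e 0)
      · subst h2
        have ha : a = D.vtx (Dc.e 1) := by rw [← hva, Dc.step 0, zero_add]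
        have hb : b = D.vtx (Dc.e 0) := by rw [← hvb, D.mu_invol]
        rw [ha, hb]
        exact hv1v0
      · exact Relation.ReflTransGen.single ⟨h, ⟨h1, h2⟩, hva, hvb⟩
  have h := hconn v w
  induction h with
  | refl => exact Relation.ReflTransGen.refl
  | tail _ h2 ih => exact Relation.ReflTransGen.trans ih (hone _ _ h2)

end Diagram
namespace Diagram

/-- Following the unique `x`–`y` structure produces a cycle of `x`-labelled
half-edges through any given `x`-labelled half-edge. -/
lemma exists_cycle_through (D : Diagram) (x y : Fld) (hne : x ≠ y)
    (hxy : ∀ h, D.lab h = x → D.lab (D.mu h) = y)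
    (huniqx : ∀ h h', D.vtx h = D.vtx h' → D.lab h = x → D.lab h' = x → h = h')
    (huniqy : ∀ h h', D.vtx h = D.vtx h' → D.lab h = y → D.lab h' = y → h = h')
    (hexistx : ∀ h, D.lab h = y → ∃ h', D.vtx h' = D.vtx h ∧ D.lab h' = x)
    (h0 : D.H) (hl0 : D.lab h0 = x) :
    ∃ Dc : D.Cycle, Dc.e 0 = h0 ∧ ∀ i, D.lab (Dc.e i) = x := by
  classical
  set X := {h : D.H // D.lab h = x} with hX
  have hg : ∀ h : X, ∃ h' : D.H, D.vtx h' = D.vtx (D.mu h.val) ∧ D.lab h' = x :=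
    fun h => hexistx (D.mu h.val) (hxy h.val h.2)
  choose g hgv hgl using hg
  set G : X → X := fun h => ⟨g h, hgl h⟩ with hG
  have hGinj : Function.Injective G := by
    intro h1 h2 h12
    have hv : D.vtx (D.mu h1.val) = D.vtx (D.mu h2.val) := by
      rw [← hgv h1, ← hgv h2]
      exact congrArg (fun z : X => D.vtx z.val) h12
    have := huniqy (D.mu h1.val) (D.mu h2.val) hv (hxy _ h1.2) (hxy _ h2.2)
    exact Subtype.ext (D.mu_invol.injective this)
  set p : X := ⟨h0, hl0⟩ with hp
  have hper : ∃ m, 0 < m ∧ G^[m] p = p := by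
    obtain ⟨i, j, hij, hmap⟩ := Finite.exists_ne_map_eq_of_infinite (fun i : ℕ => G^[i] p)
    rcases Nat.lt_or_ge i j with hlt | hge
    · refine ⟨j - i, by omega, ?_⟩
      apply hGinj.iterate i
      rw [← Function.iterate_add_apply]
      have : i + (j - i) = j := by omega
      rw [this]
      exact hmap.symm
    · have hlt : j < i := by omega
      refine ⟨i - j, by omega, ?_⟩
      apply hGinj.iterate j
      rw [← Function.iterate_add_apply]
      have : j + (i - j) = i := by omega
      rw [this]
      exact hmap
  set n := Nat.find hper with hn
  have hnspec : 0 < n ∧ G^[n] p = p := Nat.find_spec hper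
  have hnz : NeZero n := ⟨hnspec.1.ne'⟩
  have hdist : ∀ i j, i < j → j < n → G^[i] p ≠ G^[j] p := by
    intro i j hij hjn heq
    have : G^[j - i] p = p := by
      apply hGinj.iterate i
      rw [← Function.iterate_add_apply]
      have h' : i + (j - i) = j := by omega
      rw [h']
      exact heq.symm
    exact Nat.find_min hper (show j - i < n by omega) ⟨by omega, this⟩
  have hkey : ∀ q r : ℕ, G^[n * q + r] p = G^[r] p := by
    intro q
    induction q with
    | zero => intro r; simp
    | succ q ih =>
      intro r
      have h' : n * (q + 1) + r = (n * q + r) + n := by ring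
      rw [h', Function.iterate_add_apply, hnspec.2]
      exact ih r
  have hmod : ∀ a : ℕ, G^[a % n] p = G^[a] p := by
    intro a
    conv_rhs => rw [← Nat.div_add_mod a n]
    exact (hkey (a / n) (a % n)).symm
  have hvalsucc : ∀ i : ZMod n, (i + 1).val = (i.val + 1) % n := by
    intro i
    calc (i + 1).val = (((i.val : ℕ) : ZMod n) + 1).val := by
          rw [ZMod.natCast_rightInverse i]
      _ = (((i.val + 1 : ℕ) : ZMod n)).val := by push_cast; ring_nf
      _ = (i.val + 1) % n := ZMod.val_natCast n _
  have hiterne : ∀ i j : ZMod n, i ≠ j → G^[i.val] p ≠ G^[j.val] p := by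
    intro i j hij heq
    have hvne : i.val ≠ j.val := fun hv => hij (ZMod.val_injective n hv)
    rcases Nat.lt_or_ge i.val j.val with hlt | hge
    · exact hdist i.val j.val hlt (ZMod.val_lt j) heq
    · exact hdist j.val i.val (by omega) (ZMod.val_lt i) heq.symm
  refine ⟨⟨n, hnspec.1, fun i => (G^[i.val] p).val, ?_, ?_, ?_⟩, ?_, ?_⟩
  · intro i
    show D.vtx (D.mu ((G^[i.val] p).val)) = D.vtx ((G^[(i+1).val] p).val)
    rw [hvalsucc i, hmod (i.val + 1), Function.iterate_succ_apply']
    exact (hgv (G^[i.val] p)).symm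
  · intro i j hij
    constructor
    · intro heq
      exact hiterne i j hij (Subtype.ext heq)
    · intro heq
      apply hne
      have heq' : (G^[i.val] p).val = D.mu ((G^[j.val] p).val) := heq
      rw [← (G^[i.val] p).2, heq']
      exact hxy _ (G^[j.val] p).2
  · intro i j hv
    by_contra hij
    exact hiterne i j hij
      (Subtype.ext (huniqx _ _ hv (G^[i.val] p).2 (G^[j.val] p).2))
  · show (G^[(0 : ZMod n).val] p).val = h0
    rw [ZMod.val_zero]
    rfl
  · intro i
    exact (G^[i.val] p).2

end Diagram
namespace Diagram

/-- charge detecting external `A`, `ψ`, `c`, `φ` legs -/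
def q1f : Fld → ℤ
  | Fld.A => 1 | Fld.psi => 1 | Fld.c => 1 | Fld.phi => 1
  | _ => -1

/-- charge detecting vertices of types 2 and 7 -/
def q2f : Fld → ℤ
  | Fld.psi => 1 | Fld.phi => 1
  | Fld.chibar => -1 | Fld.etabar => -1 | Fld.phibar => -1
  | _ => 0

/-- charge detecting vertices of type 6 -/
def q3f : Fld → ℤ
  | Fld.phi => 1 | Fld.phibar => -1
  | _ => 0

/-- charge detecting external `cbar` legs -/
def q4f : Fld → ℤ
  | Fld.c => 1 | Fld.cbar => -1
  | _ => 0

lemma vertex_cases (D : Diagram) (v : D.V) :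
    (D.labels v = {Fld.B, Fld.A, Fld.A} ∨
     D.labels v = {Fld.chibar, Fld.A, Fld.c} ∨
     D.labels v = {Fld.A, Fld.psi, Fld.chibar} ∨
     D.labels v = {Fld.A, Fld.cbar, Fld.c} ∨
     D.labels v = {Fld.A, Fld.phibar, Fld.phi} ∨
     D.labels v = {Fld.phibar, Fld.c, Fld.psi} ∨
     D.labels v = {Fld.chibar, Fld.c, Fld.A, Fld.A}) ∨
    ∃ h, D.fiber v = {h} ∧ D.labels v = {D.lab h} := by
  rcases D.vtx_ok v with hv | ⟨h, hv⟩
  · left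
    simpa [vertexTypes, labels, fiber] using hv
  · right
    have hfib : D.fiber v = {h} := hv
    refine ⟨h, hfib, ?_⟩
    rw [labels, hfib]
    rfl

lemma classification (D : Diagram) (hconn : D.Connected) (C : D.Cycle) :
    Fintype.card D.H = 2 * Fintype.card D.V ∧
    ∀ v : D.V,
      (D.labels v = {Fld.B, Fld.A, Fld.A} ∨
       D.labels v = {Fld.A, Fld.psi, Fld.chibar} ∨
       D.labels v = {Fld.A, Fld.cbar, Fld.c} ∨
       D.labels v = {Fld.A, Fld.phibar, Fld.phi}) ∨
      ∃ h, D.fiber v = {h} ∧ (D.lab h = Fld.B ∨ D.lab h = Fld.b) := by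
  classical
  -- graph-theoretic lower bound
  have hbound : 2 * Fintype.card D.V ≤ Fintype.card D.H := by
    have h := D.graph_bound (fun _ => True) (fun h _ => trivial) C (fun _ => trivial)
      (fun v w => Relation.ReflTransGen.mono (r := D.Adj)
        (fun a b hab => by obtain ⟨h, h1, h2⟩ := hab; exact ⟨h, trivial, h1, h2⟩)
        _ _ (hconn v w))
    simpa using h
  -- charge sums
  have hsum1 : ∑ v : D.V, D.W q1f v = 0 := by
    apply D.sum_W
    intro p hp
    fin_cases hp <;> decide
  have hsum2 : ∑ v : D.V, D.W q2f v = 0 := by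
    apply D.sum_W
    intro p hp
    fin_cases hp <;> decide
  have hsum3 : ∑ v : D.V, D.W q3f v = 0 := by
    apply D.sum_W
    intro p hp
    fin_cases hp <;> decide
  have hsum4 : ∑ v : D.V, D.W q4f v = 0 := by
    apply D.sum_W
    intro p hp
    fin_cases hp <;> decide
  -- stage 1 : per-vertex inequality
  have hcard_le : ∀ v : D.V, ((D.fiber v).card : ℤ) ≤ 2 + D.W q1f v := by
    intro v
    rcases D.vertex_cases v with (hM|hM|hM|hM|hM|hM|hM) | ⟨h, hfib, hM⟩ <;>
      rw [show ((D.fiber v).card : ℤ) = (Multiset.card (D.labels v) : ℤ) by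
            rw [card_fiber_eq], W, hM]
    · decide
    · decide
    · decide
    · decide
    · decide
    · decide
    · decide
    · have : (-1 : ℤ) ≤ q1f (D.lab h) := by cases D.lab h <;> decide
      simp only [Multiset.card_singleton, Multiset.map_singleton, Multiset.sum_singleton]
      omega
  have hH_sum : (Fintype.card D.H : ℤ) = ∑ v : D.V, ((D.fiber v).card : ℤ) := by
    rw [card_H_eq_sum]
    push_cast
    rfl
  have hH_le : (Fintype.card D.H : ℤ) ≤ 2 * Fintype.card D.V := by
    rw [hH_sum]
    calc ∑ v : D.V, ((D.fiber v).card : ℤ) ≤ ∑ v : D.V, (2 + D.W q1f v) :=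
          Finset.sum_le_sum (fun v _ => hcard_le v)
      _ = 2 * Fintype.card D.V := by
          rw [Finset.sum_add_distrib, hsum1, add_zero, Finset.sum_const, Finset.card_univ]
          push_cast
          ring
  have hcardHV : Fintype.card D.H = 2 * Fintype.card D.V := by
    have h1 := hbound
    omega
  -- per-vertex equality in stage 1
  have hveq : ∀ v : D.V, ((D.fiber v).card : ℤ) = 2 + D.W q1f v := by
    have hzero : ∑ v : D.V, (2 + D.W q1f v - ((D.fiber v).card : ℤ)) = 0 := by
      rw [Finset.sum_sub_distrib, Finset.sum_add_distrib, hsum1, add_zero, ← hH_sum,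
        Finset.sum_const, Finset.card_univ, hcardHV]
      push_cast
      ring
    have hnn : ∀ v ∈ Finset.univ, (0:ℤ) ≤ 2 + D.W q1f v - ((D.fiber v).card : ℤ) := by
      intro v _
      have := hcard_le v
      omega
    have hall := (Finset.sum_eq_zero_iff_of_nonneg hnn).1 hzero
    intro v
    have := hall v (Finset.mem_univ v)
    omega
  have hlab_ext : ∀ v h, D.fiber v = {h} → D.labels v = {D.lab h} := by
    intro v h hfib
    rw [labels, hfib]
    rfl
  have hW_ext : ∀ (q : Fld → ℤ) v h, D.fiber v = {h} → D.W q v = q (D.lab h) := by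
    intro q v h hfib
    rw [W, hlab_ext v h hfib]
    simp
  have hext1 : ∀ v h, D.fiber v = {h} → q1f (D.lab h) = -1 := by
    intro v h hfib
    have h1 := hveq v
    rw [hfib, hW_ext q1f v h hfib] at h1
    simp at h1
    omega
  -- stage 2
  have hzero2 : ∀ v : D.V, D.W q2f v = 0 := by
    have hnp : ∀ v ∈ Finset.univ, D.W q2f v ≤ 0 := by
      intro v _
      rcases D.vertex_cases v with (hM|hM|hM|hM|hM|hM|hM) | ⟨h, hfib, hM⟩
      · rw [W, hM]; decide
      · rw [W, hM]; decide
      · rw [W, hM]; decide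
      · rw [W, hM]; decide
      · rw [W, hM]; decide
      · rw [W, hM]; decide
      · rw [W, hM]; decide
      · rw [hW_ext q2f v h hfib]
        have he := hext1 v h hfib
        revert he
        cases D.lab h <;> decide
    intro v
    exact (Finset.sum_eq_zero_iff_of_nonpos hnp).1 hsum2 v (Finset.mem_univ v)
  have hnoT2 : ∀ v, D.labels v ≠ {Fld.chibar, Fld.A, Fld.c} := by
    intro v hM
    have h2 := hzero2 v
    rw [W, hM] at h2
    exact absurd h2 (by decide)
  have hnoT7 : ∀ v, D.labels v ≠ {Fld.chibar, Fld.c, Fld.A, Fld.A} := by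
    intro v hM
    have h2 := hzero2 v
    rw [W, hM] at h2
    exact absurd h2 (by decide)
  have hext2 : ∀ v h, D.fiber v = {h} → q2f (D.lab h) = 0 := by
    intro v h hfib
    have h2 := hzero2 v
    rwa [hW_ext q2f v h hfib] at h2
  -- stage 3
  have hzero3 : ∀ v : D.V, D.W q3f v = 0 := by
    have hnp : ∀ v ∈ Finset.univ, D.W q3f v ≤ 0 := by
      intro v _
      rcases D.vertex_cases v with (hM|hM|hM|hM|hM|hM|hM) | ⟨h, hfib, hM⟩
      · rw [W, hM]; decide
      · rw [W, hM]; decide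
      · rw [W, hM]; decide
      · rw [W, hM]; decide
      · rw [W, hM]; decide
      · rw [W, hM]; decide
      · rw [W, hM]; decide
      · rw [hW_ext q3f v h hfib]
        have he := hext1 v h hfib
        revert he
        cases D.lab h <;> decide
    intro v
    exact (Finset.sum_eq_zero_iff_of_nonpos hnp).1 hsum3 v (Finset.mem_univ v)
  have hnoT6 : ∀ v, D.labels v ≠ {Fld.phibar, Fld.c, Fld.psi} := by
    intro v hM
    have h2 := hzero3 v
    rw [W, hM] at h2
    exact absurd h2 (by decide)
  -- stage 4
  have hzero4 : ∀ v : D.V, D.W q4f v = 0 := by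
    have hnp : ∀ v ∈ Finset.univ, D.W q4f v ≤ 0 := by
      intro v _
      rcases D.vertex_cases v with (hM|hM|hM|hM|hM|hM|hM) | ⟨h, hfib, hM⟩
      · rw [W, hM]; decide
      · exact absurd hM (hnoT2 v)
      · rw [W, hM]; decide
      · rw [W, hM]; decide
      · rw [W, hM]; decide
      · exact absurd hM (hnoT6 v)
      · exact absurd hM (hnoT7 v)
      · rw [hW_ext q4f v h hfib]
        have he := hext1 v h hfib
        revert he
        cases D.lab h <;> decide
    intro v
    exact (Finset.sum_eq_zero_iff_of_nonpos hnp).1 hsum4 v (Finset.mem_univ v)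
  have hext4 : ∀ v h, D.fiber v = {h} → q4f (D.lab h) = 0 := by
    intro v h hfib
    have h2 := hzero4 v
    rwa [hW_ext q4f v h hfib] at h2
  refine ⟨hcardHV, fun v => ?_⟩
  rcases D.vertex_cases v with (hM|hM|hM|hM|hM|hM|hM) | ⟨h, hfib, hM⟩
  · exact Or.inl (Or.inl hM)
  · exact absurd hM (hnoT2 v)
  · exact Or.inl (Or.inr (Or.inl hM))
  · exact Or.inl (Or.inr (Or.inr (Or.inl hM)))
  · exact Or.inl (Or.inr (Or.inr (Or.inr hM)))
  · exact absurd hM (hnoT6 v)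
  · exact absurd hM (hnoT7 v)
  · refine Or.inr ⟨h, hfib, ?_⟩
    have e1 := hext1 v h hfib
    have e2 := hext2 v h hfib
    have e4 := hext4 v h hfib
    revert e1 e2 e4
    cases D.lab h <;> decide

end Diagram
namespace Diagram

lemma cycle_in_half (D : Diagram) (C : D.Cycle) (i : ZMod C.n) :
    D.vtx (D.mu (C.e (i - 1))) = D.vtx (C.e i) := by
  rw [C.step (i - 1), sub_add_cancel]

lemma cycle_two_halves (D : Diagram) (C : D.Cycle) (i : ZMod C.n) :
    D.mu (C.e (i - 1)) ∈ D.fiber (D.vtx (C.e i)) ∧ D.mu (C.e (i - 1)) ≠ C.e i := by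
  constructor
  · exact mem_fiber.2 (D.cycle_in_half C i)
  · by_cases hc : i - 1 = i
    · rw [hc]
      exact D.mu_ne (C.e i)
    · exact (Ne.symm (C.edges_distinct i (i - 1) (fun he => hc he.symm)).2)

lemma cycle_not_ext (D : Diagram) (C : D.Cycle) (i : ZMod C.n) (h' : D.H) :
    D.fiber (D.vtx (C.e i)) ≠ {h'} := by
  intro hfib
  obtain ⟨hmem, hne⟩ := D.cycle_two_halves C i
  have h1 : C.e i ∈ D.fiber (D.vtx (C.e i)) := D.self_mem_fiber _
  rw [hfib, Finset.mem_singleton] at hmem h1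
  exact hne (hmem.trans h1.symm)

/-- A half-edge at a cycle vertex whose matched pair lies on the cycle is one of
the two cycle half-edges at that vertex. -/
lemma cycle_halves (D : Diagram) (C : D.Cycle) (k : ZMod C.n) (h : D.H)
    (hv : D.vtx h = D.vtx (C.e k)) (hon : ∃ i, C.e i = h ∨ C.e i = D.mu h) :
    h = C.e k ∨ h = D.mu (C.e (k - 1)) := by
  obtain ⟨i, hi | hi⟩ := hon
  · left
    rw [← hi]
    congr 1
    apply C.vtx_inj
    show D.vtx (C.e i) = D.vtx (C.e k)
    rw [hi, hv]
  · right
    have h1 : D.mu (C.e i) = h := by rw [hi, D.mu_invol]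
    have h2 : D.vtx (C.e (i + 1)) = D.vtx (C.e k) := by
      rw [← C.step i, h1, hv]
    have h3 : i + 1 = k := C.vtx_inj h2
    have h4 : i = k - 1 := by rw [← h3]; ring
    rw [← h4, h1]

/-- If some matched pair with labels `{x,y}` were off the cycle, the diagram
would contain two independent cycles, contradicting `#H = 2#V`. -/
lemma ferm_on_cycle (D : Diagram) (hconn : D.Connected) (C : D.Cycle)
    (hcardHV : Fintype.card D.H = 2 * Fintype.card D.V)
    (x y : Fld) (hne : x ≠ y)
    (hxy : ∀ h, D.lab h = x → D.lab (D.mu h) = y)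
    (huniqx : ∀ h h', D.vtx h = D.vtx h' → D.lab h = x → D.lab h' = x → h = h')
    (huniqy : ∀ h h', D.vtx h = D.vtx h' → D.lab h = y → D.lab h' = y → h = h')
    (hexistx : ∀ h, D.lab h = y → ∃ h', D.vtx h' = D.vtx h ∧ D.lab h' = x) :
    ∀ h, D.lab h = x → ∃ i, C.e i = h ∨ C.e i = D.mu h := by
  classical
  intro h hl
  by_contra hno
  push_neg at hno
  obtain ⟨Dc, hDc0, _⟩ :=
    D.exists_cycle_through x y hne hxy huniqx huniqy hexistx h hl
  set ok : D.H → Prop := fun h' => h' ≠ Dc.e 0 ∧ h' ≠ D.mu (Dc.e 0) with hok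
  have hmu : ∀ h', ok h' → ok (D.mu h') := by
    rintro h' ⟨h1, h2⟩
    constructor
    · intro he
      exact h2 (by rw [← he, D.mu_invol])
    · intro he
      exact h1 (D.mu_invol.injective he)
  have hCok : ∀ i, ok (C.e i) := by
    intro i
    rw [hok, hDc0]
    exact hno i
  have hb := D.graph_bound ok hmu C hCok (D.detour hconn Dc)
  have hfil : (Finset.univ.filter ok).card = Fintype.card D.H - 2 := by
    have hsd : (Finset.univ.filter ok) = Finset.univ \ {Dc.e 0, D.mu (Dc.e 0)} := by
      ext h'
      simp only [Finset.mem_filter, Finset.mem_univ, true_and, Finset.mem_sdiff,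
        Finset.mem_insert, Finset.mem_singleton, hok]
      tauto
    rw [hsd, Finset.card_sdiff_of_subset (Finset.subset_univ _), Finset.card_univ]
    congr 1
    rw [Finset.card_insert_of_notMem (by simp [Ne.symm (D.mu_ne (Dc.e 0))]),
      Finset.card_singleton]
  have hpos : 0 < Fintype.card D.H := Fintype.card_pos_iff.2 ⟨h⟩
  omega

end Diagram
namespace Diagram

/-- At a 3-valent cycle vertex there is exactly one half-edge besides the two
cycle half-edges. -/
lemma third_leg (D : Diagram) (C : D.Cycle) (k : ZMod C.n)
    (hcard3 : Multiset.card (D.labels (D.vtx (C.e k))) = 3) :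
    ∃ a, D.fiber (D.vtx (C.e k)) \ {C.e k, D.mu (C.e (k - 1))} = {a} ∧
      a ∈ D.fiber (D.vtx (C.e k)) ∧ a ≠ C.e k ∧ a ≠ D.mu (C.e (k - 1)) := by
  classical
  obtain ⟨hmem2, hne2⟩ := D.cycle_two_halves C k
  have hsub : ({C.e k, D.mu (C.e (k - 1))} : Finset D.H) ⊆ D.fiber (D.vtx (C.e k)) := by
    intro z hz
    rcases Finset.mem_insert.1 hz with rfl | hz
    · exact D.self_mem_fiber _
    · rw [Finset.mem_singleton] at hz
      rw [hz]
      exact hmem2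
  have hcard2 : ({C.e k, D.mu (C.e (k - 1))} : Finset D.H).card = 2 := by
    rw [Finset.card_insert_of_notMem (by simp [Ne.symm hne2]), Finset.card_singleton]
  have hcardf : (D.fiber (D.vtx (C.e k))).card = 3 := by
    rw [card_fiber_eq, hcard3]
  have hone : (D.fiber (D.vtx (C.e k)) \ {C.e k, D.mu (C.e (k - 1))}).card = 1 := by
    rw [Finset.card_sdiff_of_subset hsub, hcardf, hcard2]
  obtain ⟨a, ha⟩ := Finset.card_eq_one.1 hone
  have hamem : a ∈ D.fiber (D.vtx (C.e k)) \ {C.e k, D.mu (C.e (k - 1))} := by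
    rw [ha]
    exact Finset.mem_singleton_self a
  rw [Finset.mem_sdiff] at hamem
  obtain ⟨haf, hanot⟩ := hamem
  simp only [Finset.mem_insert, Finset.mem_singleton, not_or] at hanot
  exact ⟨a, ha, haf, hanot.1, hanot.2⟩

/-- Structure of a cycle vertex of one of the fermionic types. -/
lemma cycle_struct_ferm (D : Diagram) (C : D.Cycle) (x y : Fld) (T : Multiset Fld)
    (hxyne : x ≠ y)
    (hcardT : Multiset.card T = 3)
    (hcx : Multiset.count x T = 1) (hcy : Multiset.count y T = 1)
    (hmemT : ∀ a ∈ T, a = Fld.A ∨ a = x ∨ a = y)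
    (hxT : x ∈ T) (hyT : y ∈ T)
    (hxy : ∀ h, D.lab h = x → D.lab (D.mu h) = y)
    (hyx : ∀ h, D.lab h = y → D.lab (D.mu h) = x)
    (hvxy : ∀ h, D.lab h = x ∨ D.lab h = y → D.labels (D.vtx h) = T)
    (hon : ∀ h, D.lab h = x ∨ D.lab h = y → ∃ i, C.e i = h ∨ C.e i = D.mu h)
    (k : ZMod C.n) (hk : D.labels (D.vtx (C.e k)) = T) :
    ((D.lab (C.e k) = x ∧ D.lab (D.mu (C.e k)) = y) ∨
     (D.lab (C.e k) = y ∧ D.lab (D.mu (C.e k)) = x)) ∧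
    (D.lab (D.mu (C.e (k - 1))) = x ∨ D.lab (D.mu (C.e (k - 1))) = y) ∧
    D.labels (D.vtx (C.e (k + 1))) = T ∧
    (∃ a, D.fiber (D.vtx (C.e k)) \ {C.e k, D.mu (C.e (k - 1))} = {a}
       ∧ D.lab a = Fld.A) := by
  classical
  obtain ⟨hx, hxmem, hxlab⟩ := exists_of_mem_labels (show x ∈ D.labels (D.vtx (C.e k)) by
    rw [hk]; exact hxT)
  obtain ⟨hy, hymem, hylab⟩ := exists_of_mem_labels (show y ∈ D.labels (D.vtx (C.e k)) by
    rw [hk]; exact hyT)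
  have hxvtx : D.vtx hx = D.vtx (C.e k) := mem_fiber.1 hxmem
  have hyvtx : D.vtx hy = D.vtx (C.e k) := mem_fiber.1 hymem
  have hxcyc := D.cycle_halves C k hx hxvtx (hon hx (Or.inl hxlab))
  have hycyc := D.cycle_halves C k hy hyvtx (hon hy (Or.inr hylab))
  have hxyhalf : hx ≠ hy := fun he => hxyne (by rw [← hxlab, he, hylab])
  have hcases : (hx = C.e k ∧ hy = D.mu (C.e (k - 1))) ∨
      (hy = C.e k ∧ hx = D.mu (C.e (k - 1))) := by
    rcases hxcyc with h1 | h1 <;> rcases hycyc with h2 | h2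
    · exact absurd (h1.trans h2.symm) hxyhalf
    · exact Or.inl ⟨h1, h2⟩
    · exact Or.inr ⟨h2, h1⟩
    · exact absurd (h1.trans h2.symm) hxyhalf
  have hmain : (D.lab (C.e k) = x ∧ D.lab (D.mu (C.e k)) = y) ∨
      (D.lab (C.e k) = y ∧ D.lab (D.mu (C.e k)) = x) := by
    rcases hcases with ⟨h1, _⟩ | ⟨h1, _⟩
    · left
      have hl : D.lab (C.e k) = x := by rw [← h1, hxlab]
      exact ⟨hl, hxy _ hl⟩
    · right
      have hl : D.lab (C.e k) = y := by rw [← h1, hylab]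
      exact ⟨hl, hyx _ hl⟩
  have hin : D.lab (D.mu (C.e (k - 1))) = x ∨ D.lab (D.mu (C.e (k - 1))) = y := by
    rcases hcases with ⟨_, h2⟩ | ⟨_, h2⟩
    · right; rw [← h2, hylab]
    · left; rw [← h2, hxlab]
  refine ⟨hmain, hin, ?_, ?_⟩
  · have hl : D.lab (D.mu (C.e k)) = x ∨ D.lab (D.mu (C.e k)) = y := by
      rcases hmain with ⟨_, h2⟩ | ⟨_, h2⟩
      · exact Or.inr h2
      · exact Or.inl h2
    have := hvxy _ hl
    rwa [C.step k] at this
  · obtain ⟨a, ha, haf, hane1, hane2⟩ := D.third_leg C k (by rw [hk, hcardT])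
    refine ⟨a, ha, ?_⟩
    have hamem : D.lab a ∈ T := by
      rw [← hk]
      have : D.vtx a = D.vtx (C.e k) := mem_fiber.1 haf
      rw [← this]
      exact lab_mem_labels a
    rcases hmemT _ hamem with hA | hxx | hyy
    · exact hA
    · exfalso
      have hax : a = hx := unique_of_count_one (by rw [hk]; exact hcx) a hx haf hxmem hxx hxlab
      rcases hxcyc with h1 | h1
      · exact hane1 (hax.trans h1)
      · exact hane2 (hax.trans h1)
    · exfalso
      have hay : a = hy := unique_of_count_one (by rw [hk]; exact hcy) a hy haf hymem hyy hylab
      rcases hycyc with h1 | h1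
      · exact hane1 (hay.trans h1)
      · exact hane2 (hay.trans h1)

/-- Structure of the cycle when all its vertices are of type `{B,A,A}`. -/
lemma cycle_struct_t1 (D : Diagram) (C : D.Cycle)
    (hall : ∀ i, D.labels (D.vtx (C.e i)) = {Fld.B, Fld.A, Fld.A})
    (hpartB : ∀ h, D.lab h = Fld.B → D.lab (D.mu h) = Fld.A)
    (hpartA : ∀ h, D.lab h = Fld.A → D.lab (D.mu h) = Fld.B ∨ D.lab (D.mu h) = Fld.b) :
    ∀ k, ((D.lab (C.e k) = Fld.A ∧ D.lab (D.mu (C.e k)) = Fld.B) ∨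
          (D.lab (C.e k) = Fld.B ∧ D.lab (D.mu (C.e k)) = Fld.A)) ∧
         (∃ a, D.fiber (D.vtx (C.e k)) \ {C.e k, D.mu (C.e (k - 1))} = {a}
            ∧ D.lab a = Fld.A) := by
  classical
  have hcountB : ∀ i, Multiset.count Fld.B (D.labels (D.vtx (C.e i))) = 1 := by
    intro i
    rw [hall i]
    decide
  have hedge : ∀ i, (D.lab (C.e i) = Fld.A ∧ D.lab (D.mu (C.e i)) = Fld.B) ∨
      (D.lab (C.e i) = Fld.B ∧ D.lab (D.mu (C.e i)) = Fld.A) := by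
    intro i
    have hmem : D.lab (C.e i) ∈ D.labels (D.vtx (C.e i)) := lab_mem_labels _
    rw [hall i] at hmem
    have hmem' : D.lab (C.e i) = Fld.B ∨ D.lab (C.e i) = Fld.A := by
      rcases Multiset.mem_cons.1 hmem with h | h
      · exact Or.inl h
      · rcases Multiset.mem_cons.1 h with h' | h'
        · exact Or.inr h'
        · exact Or.inr (by simpa using h')
    rcases hmem' with hB | hA
    · exact Or.inr ⟨hB, hpartB _ hB⟩
    · left
      refine ⟨hA, ?_⟩
      rcases hpartA _ hA with h1 | h1
      · exact h1
      · exfalso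
        have hmem2 : D.lab (D.mu (C.e i)) ∈ D.labels (D.vtx (D.mu (C.e i))) :=
          lab_mem_labels _
        rw [C.step i, hall (i + 1), h1] at hmem2
        exact absurd hmem2 (by decide)
  set Bh : ZMod C.n → D.H :=
    fun i => if D.lab (C.e i) = Fld.B then C.e i else D.mu (C.e i) with hBh
  have hBlab : ∀ i, D.lab (Bh i) = Fld.B := by
    intro i
    by_cases hc : D.lab (C.e i) = Fld.B
    · simp only [hBh, if_pos hc]
      exact hc
    · simp only [hBh, if_neg hc]
      rcases hedge i with ⟨_, h2⟩ | ⟨h1, _⟩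
      · exact h2
      · exact absurd h1 hc
  set g : ZMod C.n → ZMod C.n :=
    fun i => if D.lab (C.e i) = Fld.B then i else i + 1 with hg
  have hBvtx : ∀ i, D.vtx (Bh i) = D.vtx (C.e (g i)) := by
    intro i
    by_cases hc : D.lab (C.e i) = Fld.B
    · simp only [hBh, hg, if_pos hc]
    · simp only [hBh, hg, if_neg hc]
      exact C.step i
  have hginj : Function.Injective g := by
    intro i j hgij
    by_contra hne
    have hd := C.edges_distinct i j hne
    have hd' := C.edges_distinct j i (Ne.symm hne)
    have hBij : Bh i = Bh j := by
      refine unique_of_count_one (hcountB (g i)) _ _ ?_ ?_ (hBlab i) (hBlab j)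
      · exact mem_fiber.2 (hBvtx i)
      · exact mem_fiber.2 (by rw [hBvtx j, hgij])
    by_cases hci : D.lab (C.e i) = Fld.B <;> by_cases hcj : D.lab (C.e j) = Fld.B
    · simp only [hBh, if_pos hci, if_pos hcj] at hBij
      exact hd.1 hBij
    · simp only [hBh, if_pos hci, if_neg hcj] at hBij
      exact hd.2 hBij
    · simp only [hBh, if_neg hci, if_pos hcj] at hBij
      exact hd'.2 hBij.symm
    · simp only [hBh, if_neg hci, if_neg hcj] at hBij
      exact hd.1 (D.mu_invol.injective hBij)
  haveI : NeZero C.n := ⟨C.npos.ne'⟩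
  have hgsurj : Function.Surjective g := Finite.injective_iff_surjective.1 hginj
  intro k
  refine ⟨hedge k, ?_⟩
  obtain ⟨i, hik⟩ := hgsurj k
  have hBk : Bh i = C.e k ∨ Bh i = D.mu (C.e (k - 1)) := by
    by_cases hc : D.lab (C.e i) = Fld.B
    · left
      simp only [hBh, if_pos hc]
      simp only [hg, if_pos hc] at hik
      rw [hik]
    · right
      simp only [hBh, if_neg hc]
      simp only [hg, if_neg hc] at hik
      have : i = k - 1 := by rw [← hik]; ring
      rw [this]
  obtain ⟨a, ha, haf, hane1, hane2⟩ := D.third_leg C k (by rw [hall k]; decide)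
  refine ⟨a, ha, ?_⟩
  have hamem : D.lab a ∈ ({Fld.B, Fld.A, Fld.A} : Multiset Fld) := by
    rw [← hall k]
    have hv : D.vtx a = D.vtx (C.e k) := mem_fiber.1 haf
    rw [← hv]
    exact lab_mem_labels a
  have hamem' : D.lab a = Fld.B ∨ D.lab a = Fld.A := by
    rcases Multiset.mem_cons.1 hamem with h | h
    · exact Or.inl h
    · rcases Multiset.mem_cons.1 h with h' | h'
      · exact Or.inr h'
      · exact Or.inr (by simpa using h')
  rcases hamem' with hB | hA
  · exfalso
    have haB : a = Bh i := by
      refine unique_of_count_one (hcountB k) _ _ haf ?_ hB (hBlab i)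
      rcases hBk with h1 | h1
      · rw [h1]
        exact D.self_mem_fiber _
      · rw [h1]
        exact (D.cycle_two_halves C k).1
    rcases hBk with h1 | h1
    · exact hane1 (haB.trans h1)
    · exact hane2 (haB.trans h1)
  · exact hA

end Diagram
namespace Diagram

lemma loop_structure_aux (D : Diagram) (hconn : D.Connected)
    (C : D.Cycle) :
    -- first Betti number 1
    Fintype.card D.H = 2 * Fintype.card D.V ∧
    -- the cycle consists of vertices of a single type T joined by propagators
    -- of the corresponding type P, each cycle vertex carrying exactly one
    -- remaining half-edge, labeled A
    (∃ T P : Multiset Fld,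
      ((T = {Fld.B, Fld.A, Fld.A} ∧ P = {Fld.A, Fld.B}) ∨
       (T = {Fld.A, Fld.cbar, Fld.c} ∧ P = {Fld.c, Fld.cbar}) ∨
       (T = {Fld.A, Fld.psi, Fld.chibar} ∧ P = {Fld.chibar, Fld.psi}) ∨
       (T = {Fld.A, Fld.phibar, Fld.phi} ∧ P = {Fld.phi, Fld.phibar})) ∧
      ∀ i, D.labels (D.vtx (C.e i)) = T ∧
        ({D.lab (C.e i), D.lab (D.mu (C.e i))} : Multiset Fld) = P ∧
        ∃ a : D.H, D.fiber (D.vtx (C.e i)) \ {C.e i, D.mu (C.e (i - 1))} = {a}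
          ∧ D.lab a = Fld.A) ∧
    -- every vertex off the cycle is a {B,A,A} interaction vertex or an
    -- external vertex labeled B or b
    (∀ v : D.V, (∀ i, D.vtx (C.e i) ≠ v) →
      D.labels v = {Fld.B, Fld.A, Fld.A} ∨
      ∃ h₀, D.fiber v = {h₀} ∧ (D.lab h₀ = Fld.B ∨ D.lab h₀ = Fld.b)) ∧
    -- every edge off the cycle is an {A,B} propagator (joining {B,A,A} tree
    -- vertices) or an {A,b} propagator (hence, by the above, with its b-end
    -- at an external vertex)
    (∀ h : D.H, (∀ i, C.e i ≠ h ∧ C.e i ≠ D.mu h) →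
      ({D.lab h, D.lab (D.mu h)} : Multiset Fld) = {Fld.A, Fld.B} ∨
      ({D.lab h, D.lab (D.mu h)} : Multiset Fld) = {Fld.A, Fld.b}) := by
  haveI hnz : NeZero C.n := ⟨C.npos.ne'⟩
  obtain ⟨hcardHV, hclass⟩ := D.classification hconn C
  -- partner (propagator) lemmas
  have hpart_c : ∀ h, D.lab h = Fld.c → D.lab (D.mu h) = Fld.cbar := by
    intro h hl
    have hp := D.prop_ok h
    rw [hl] at hp
    exact (show ∀ b : Fld, ({Fld.c, b} : Multiset Fld) ∈ propTypes → b = Fld.cbar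
      by decide) _ hp
  have hpart_cbar : ∀ h, D.lab h = Fld.cbar → D.lab (D.mu h) = Fld.c := by
    intro h hl
    have hp := D.prop_ok h
    rw [hl] at hp
    exact (show ∀ b : Fld, ({Fld.cbar, b} : Multiset Fld) ∈ propTypes → b = Fld.c
      by decide) _ hp
  have hpart_chibar : ∀ h, D.lab h = Fld.chibar → D.lab (D.mu h) = Fld.psi := by
    intro h hl
    have hp := D.prop_ok h
    rw [hl] at hp
    exact (show ∀ b : Fld, ({Fld.chibar, b} : Multiset Fld) ∈ propTypes → b = Fld.psi
      by decide) _ hp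
  have hpart_phi : ∀ h, D.lab h = Fld.phi → D.lab (D.mu h) = Fld.phibar := by
    intro h hl
    have hp := D.prop_ok h
    rw [hl] at hp
    exact (show ∀ b : Fld, ({Fld.phi, b} : Multiset Fld) ∈ propTypes → b = Fld.phibar
      by decide) _ hp
  have hpart_phibar : ∀ h, D.lab h = Fld.phibar → D.lab (D.mu h) = Fld.phi := by
    intro h hl
    have hp := D.prop_ok h
    rw [hl] at hp
    exact (show ∀ b : Fld, ({Fld.phibar, b} : Multiset Fld) ∈ propTypes → b = Fld.phi
      by decide) _ hp
  have hpartB : ∀ h, D.lab h = Fld.B → D.lab (D.mu h) = Fld.A := by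
    intro h hl
    have hp := D.prop_ok h
    rw [hl] at hp
    exact (show ∀ b : Fld, ({Fld.B, b} : Multiset Fld) ∈ propTypes → b = Fld.A
      by decide) _ hp
  have hpartA : ∀ h, D.lab h = Fld.A → D.lab (D.mu h) = Fld.B ∨ D.lab (D.mu h) = Fld.b := by
    intro h hl
    have hp := D.prop_ok h
    rw [hl] at hp
    exact (show ∀ b : Fld, ({Fld.A, b} : Multiset Fld) ∈ propTypes →
      b = Fld.B ∨ b = Fld.b by decide) _ hp
  -- external vertex helper
  have hext_lab : ∀ (h h₀ : D.H), D.fiber (D.vtx h) = {h₀} → h = h₀ := by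
    intro h h₀ hfib
    have hm := D.self_mem_fiber h
    rw [hfib, Finset.mem_singleton] at hm
    exact hm
  -- no etabar label
  have hno_eta : ∀ h, D.lab h ≠ Fld.etabar := by
    intro h hl
    rcases hclass (D.vtx h) with (hM|hM|hM|hM) | ⟨h₀, hfib, hl₀⟩
    · have hmem := lab_mem_labels h; rw [hM, hl] at hmem; exact absurd hmem (by decide)
    · have hmem := lab_mem_labels h; rw [hM, hl] at hmem; exact absurd hmem (by decide)
    · have hmem := lab_mem_labels h; rw [hM, hl] at hmem; exact absurd hmem (by decide)
    · have hmem := lab_mem_labels h; rw [hM, hl] at hmem; exact absurd hmem (by decide)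
    · have heq := hext_lab h h₀ hfib
      rw [heq] at hl
      rcases hl₀ with h0 | h0 <;> rw [h0] at hl <;> exact absurd hl (by decide)
  have hpart_psi : ∀ h, D.lab h = Fld.psi → D.lab (D.mu h) = Fld.chibar := by
    intro h hl
    have hp := D.prop_ok h
    rw [hl] at hp
    have := (show ∀ b : Fld, ({Fld.psi, b} : Multiset Fld) ∈ propTypes →
      b = Fld.chibar ∨ b = Fld.etabar by decide) _ hp
    rcases this with h1 | h1
    · exact h1
    · exact absurd h1 (hno_eta _)
  -- vertex types from labels
  have hv_c : ∀ h, D.lab h = Fld.c ∨ D.lab h = Fld.cbar →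
      D.labels (D.vtx h) = {Fld.A, Fld.cbar, Fld.c} := by
    intro h hl
    rcases hclass (D.vtx h) with (hM|hM|hM|hM) | ⟨h₀, hfib, hl₀⟩
    · exfalso; have hmem := lab_mem_labels h; rw [hM] at hmem
      rcases hl with hl | hl <;> rw [hl] at hmem <;> exact absurd hmem (by decide)
    · exfalso; have hmem := lab_mem_labels h; rw [hM] at hmem
      rcases hl with hl | hl <;> rw [hl] at hmem <;> exact absurd hmem (by decide)
    · exact hM
    · exfalso; have hmem := lab_mem_labels h; rw [hM] at hmem
      rcases hl with hl | hl <;> rw [hl] at hmem <;> exact absurd hmem (by decide)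
    · exfalso; have heq := hext_lab h h₀ hfib
      rw [heq] at hl
      rcases hl with hl | hl <;> rcases hl₀ with h0 | h0 <;> rw [h0] at hl <;>
        exact absurd hl (by decide)
  have hv_psi : ∀ h, D.lab h = Fld.psi ∨ D.lab h = Fld.chibar →
      D.labels (D.vtx h) = {Fld.A, Fld.psi, Fld.chibar} := by
    intro h hl
    rcases hclass (D.vtx h) with (hM|hM|hM|hM) | ⟨h₀, hfib, hl₀⟩
    · exfalso; have hmem := lab_mem_labels h; rw [hM] at hmem
      rcases hl with hl | hl <;> rw [hl] at hmem <;> exact absurd hmem (by decide)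
    · exact hM
    · exfalso; have hmem := lab_mem_labels h; rw [hM] at hmem
      rcases hl with hl | hl <;> rw [hl] at hmem <;> exact absurd hmem (by decide)
    · exfalso; have hmem := lab_mem_labels h; rw [hM] at hmem
      rcases hl with hl | hl <;> rw [hl] at hmem <;> exact absurd hmem (by decide)
    · exfalso; have heq := hext_lab h h₀ hfib
      rw [heq] at hl
      rcases hl with hl | hl <;> rcases hl₀ with h0 | h0 <;> rw [h0] at hl <;>
        exact absurd hl (by decide)
  have hv_phi : ∀ h, D.lab h = Fld.phi ∨ D.lab h = Fld.phibar →
      D.labels (D.vtx h) = {Fld.A, Fld.phibar, Fld.phi} := by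
    intro h hl
    rcases hclass (D.vtx h) with (hM|hM|hM|hM) | ⟨h₀, hfib, hl₀⟩
    · exfalso; have hmem := lab_mem_labels h; rw [hM] at hmem
      rcases hl with hl | hl <;> rw [hl] at hmem <;> exact absurd hmem (by decide)
    · exfalso; have hmem := lab_mem_labels h; rw [hM] at hmem
      rcases hl with hl | hl <;> rw [hl] at hmem <;> exact absurd hmem (by decide)
    · exfalso; have hmem := lab_mem_labels h; rw [hM] at hmem
      rcases hl with hl | hl <;> rw [hl] at hmem <;> exact absurd hmem (by decide)
    · exact hM
    · exfalso; have heq := hext_lab h h₀ hfib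
      rw [heq] at hl
      rcases hl with hl | hl <;> rcases hl₀ with h0 | h0 <;> rw [h0] at hl <;>
        exact absurd hl (by decide)
  -- uniqueness helper
  have huniq : ∀ (x : Fld) (T : Multiset Fld),
      (∀ h, D.lab h = x → D.labels (D.vtx h) = T) → Multiset.count x T = 1 →
      ∀ h h', D.vtx h = D.vtx h' → D.lab h = x → D.lab h' = x → h = h' := by
    intro x T hvT hcnt h h' hv hl hl'
    exact unique_of_count_one (by rw [hvT h hl]; exact hcnt) h h'
      (D.self_mem_fiber h) (mem_fiber.2 hv.symm) hl hl'
  -- on-cycle lemmas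
  have hon_c : ∀ h, D.lab h = Fld.c ∨ D.lab h = Fld.cbar →
      ∃ i, C.e i = h ∨ C.e i = D.mu h := by
    have hx := D.ferm_on_cycle hconn C hcardHV Fld.c Fld.cbar (by decide) hpart_c
      (huniq Fld.c _ (fun h hl => hv_c h (Or.inl hl)) (by decide))
      (huniq Fld.cbar _ (fun h hl => hv_c h (Or.inr hl)) (by decide))
      (fun h hl => by
        obtain ⟨h', hmem, hlab⟩ := exists_of_mem_labels
          (show Fld.c ∈ D.labels (D.vtx h) by rw [hv_c h (Or.inr hl)]; decide)
        exact ⟨h', mem_fiber.1 hmem, hlab⟩)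
    intro h hl
    rcases hl with hl | hl
    · exact hx h hl
    · obtain ⟨i, hi⟩ := hx (D.mu h) (hpart_cbar h hl)
      rcases hi with hi | hi
      · exact ⟨i, Or.inr hi⟩
      · exact ⟨i, Or.inl (by rw [hi, D.mu_invol])⟩
  have hon_psi : ∀ h, D.lab h = Fld.psi ∨ D.lab h = Fld.chibar →
      ∃ i, C.e i = h ∨ C.e i = D.mu h := by
    have hx := D.ferm_on_cycle hconn C hcardHV Fld.psi Fld.chibar (by decide) hpart_psi
      (huniq Fld.psi _ (fun h hl => hv_psi h (Or.inl hl)) (by decide))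
      (huniq Fld.chibar _ (fun h hl => hv_psi h (Or.inr hl)) (by decide))
      (fun h hl => by
        obtain ⟨h', hmem, hlab⟩ := exists_of_mem_labels
          (show Fld.psi ∈ D.labels (D.vtx h) by rw [hv_psi h (Or.inr hl)]; decide)
        exact ⟨h', mem_fiber.1 hmem, hlab⟩)
    intro h hl
    rcases hl with hl | hl
    · exact hx h hl
    · obtain ⟨i, hi⟩ := hx (D.mu h) (hpart_chibar h hl)
      rcases hi with hi | hi
      · exact ⟨i, Or.inr hi⟩
      · exact ⟨i, Or.inl (by rw [hi, D.mu_invol])⟩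
  have hon_phi : ∀ h, D.lab h = Fld.phi ∨ D.lab h = Fld.phibar →
      ∃ i, C.e i = h ∨ C.e i = D.mu h := by
    have hx := D.ferm_on_cycle hconn C hcardHV Fld.phi Fld.phibar (by decide) hpart_phi
      (huniq Fld.phi _ (fun h hl => hv_phi h (Or.inl hl)) (by decide))
      (huniq Fld.phibar _ (fun h hl => hv_phi h (Or.inr hl)) (by decide))
      (fun h hl => by
        obtain ⟨h', hmem, hlab⟩ := exists_of_mem_labels
          (show Fld.phi ∈ D.labels (D.vtx h) by rw [hv_phi h (Or.inr hl)]; decide)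
        exact ⟨h', mem_fiber.1 hmem, hlab⟩)
    intro h hl
    rcases hl with hl | hl
    · exact hx h hl
    · obtain ⟨i, hi⟩ := hx (D.mu h) (hpart_phibar h hl)
      rcases hi with hi | hi
      · exact ⟨i, Or.inr hi⟩
      · exact ⟨i, Or.inl (by rw [hi, D.mu_invol])⟩
  -- cycle vertices are interaction vertices
  have hcyc4 : ∀ i, D.labels (D.vtx (C.e i)) = {Fld.B, Fld.A, Fld.A} ∨
      D.labels (D.vtx (C.e i)) = {Fld.A, Fld.psi, Fld.chibar} ∨
      D.labels (D.vtx (C.e i)) = {Fld.A, Fld.cbar, Fld.c} ∨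
      D.labels (D.vtx (C.e i)) = {Fld.A, Fld.phibar, Fld.phi} := by
    intro i
    rcases hclass (D.vtx (C.e i)) with h4 | ⟨h₀, hfib, _⟩
    · exact h4
    · exact absurd hfib (D.cycle_not_ext C i h₀)
  -- bundled fermionic structure
  have hferm3 : ∀ k, D.labels (D.vtx (C.e k)) = {Fld.A, Fld.psi, Fld.chibar} →
      ((D.lab (C.e k) = Fld.psi ∧ D.lab (D.mu (C.e k)) = Fld.chibar) ∨
       (D.lab (C.e k) = Fld.chibar ∧ D.lab (D.mu (C.e k)) = Fld.psi)) ∧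
      (D.lab (D.mu (C.e (k - 1))) = Fld.psi ∨ D.lab (D.mu (C.e (k - 1))) = Fld.chibar) ∧
      D.labels (D.vtx (C.e (k + 1))) = {Fld.A, Fld.psi, Fld.chibar} ∧
      (∃ a, D.fiber (D.vtx (C.e k)) \ {C.e k, D.mu (C.e (k - 1))} = {a}
         ∧ D.lab a = Fld.A) :=
    fun k hk => D.cycle_struct_ferm C Fld.psi Fld.chibar _ (by decide) (by decide)
      (by decide) (by decide) (by decide) (by decide) (by decide)
      hpart_psi hpart_chibar hv_psi hon_psi k hk
  have hferm4 : ∀ k, D.labels (D.vtx (C.e k)) = {Fld.A, Fld.cbar, Fld.c} →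
      ((D.lab (C.e k) = Fld.c ∧ D.lab (D.mu (C.e k)) = Fld.cbar) ∨
       (D.lab (C.e k) = Fld.cbar ∧ D.lab (D.mu (C.e k)) = Fld.c)) ∧
      (D.lab (D.mu (C.e (k - 1))) = Fld.c ∨ D.lab (D.mu (C.e (k - 1))) = Fld.cbar) ∧
      D.labels (D.vtx (C.e (k + 1))) = {Fld.A, Fld.cbar, Fld.c} ∧
      (∃ a, D.fiber (D.vtx (C.e k)) \ {C.e k, D.mu (C.e (k - 1))} = {a}
         ∧ D.lab a = Fld.A) :=
    fun k hk => D.cycle_struct_ferm C Fld.c Fld.cbar _ (by decide) (by decide)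
      (by decide) (by decide) (by decide) (by decide) (by decide)
      hpart_c hpart_cbar hv_c hon_c k hk
  have hferm5 : ∀ k, D.labels (D.vtx (C.e k)) = {Fld.A, Fld.phibar, Fld.phi} →
      ((D.lab (C.e k) = Fld.phi ∧ D.lab (D.mu (C.e k)) = Fld.phibar) ∨
       (D.lab (C.e k) = Fld.phibar ∧ D.lab (D.mu (C.e k)) = Fld.phi)) ∧
      (D.lab (D.mu (C.e (k - 1))) = Fld.phi ∨ D.lab (D.mu (C.e (k - 1))) = Fld.phibar) ∧
      D.labels (D.vtx (C.e (k + 1))) = {Fld.A, Fld.phibar, Fld.phi} ∧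
      (∃ a, D.fiber (D.vtx (C.e k)) \ {C.e k, D.mu (C.e (k - 1))} = {a}
         ∧ D.lab a = Fld.A) :=
    fun k hk => D.cycle_struct_ferm C Fld.phi Fld.phibar _ (by decide) (by decide)
      (by decide) (by decide) (by decide) (by decide) (by decide)
      hpart_phi hpart_phibar hv_phi hon_phi k hk
  -- type propagation along the cycle
  have hstepty : ∀ i, D.labels (D.vtx (C.e (i + 1))) = D.labels (D.vtx (C.e i)) := by
    intro i
    have hsimp : (i + 1 : ZMod C.n) - 1 = i := by ring
    rcases hcyc4 i with hT | hT | hT | hT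
    · rw [hT]
      have hmem := lab_mem_labels (C.e i)
      rw [hT] at hmem
      have hmem' : D.lab (C.e i) = Fld.B ∨ D.lab (C.e i) = Fld.A := by
        rcases Multiset.mem_cons.1 hmem with hz | hz
        · exact Or.inl hz
        · rcases Multiset.mem_cons.1 hz with hz' | hz'
          · exact Or.inr hz'
          · exact Or.inr (by simpa using hz')
      have hmuA : D.lab (D.mu (C.e i)) = Fld.A ∨ D.lab (D.mu (C.e i)) = Fld.B := by
        rcases hmem' with hB | hA
        · exact Or.inl (hpartB _ hB)
        · rcases hpartA _ hA with h1 | h1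
          · exact Or.inr h1
          · exfalso
            have hmem2 := lab_mem_labels (D.mu (C.e i))
            rw [C.step i, h1] at hmem2
            rcases hcyc4 (i + 1) with h' | h' | h' | h' <;> rw [h'] at hmem2 <;>
              exact absurd hmem2 (by decide)
      rcases hcyc4 (i + 1) with h' | h' | h' | h'
      · exact h'
      · exfalso
        have hin := (hferm3 (i + 1) h').2.1
        rw [hsimp] at hin
        rcases hmuA with h1 | h1 <;> rcases hin with h2 | h2 <;>
          exact absurd (h1.symm.trans h2) (by decide)
      · exfalso
        have hin := (hferm4 (i + 1) h').2.1
        rw [hsimp] at hin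
        rcases hmuA with h1 | h1 <;> rcases hin with h2 | h2 <;>
          exact absurd (h1.symm.trans h2) (by decide)
      · exfalso
        have hin := (hferm5 (i + 1) h').2.1
        rw [hsimp] at hin
        rcases hmuA with h1 | h1 <;> rcases hin with h2 | h2 <;>
          exact absurd (h1.symm.trans h2) (by decide)
    · rw [hT]; exact (hferm3 i hT).2.2.1
    · rw [hT]; exact (hferm4 i hT).2.2.1
    · rw [hT]; exact (hferm5 i hT).2.2.1
  have hall0 : ∀ i, D.labels (D.vtx (C.e i)) = D.labels (D.vtx (C.e 0)) := by
    have hnat : ∀ m : ℕ, D.labels (D.vtx (C.e ((m : ℕ) : ZMod C.n)))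
        = D.labels (D.vtx (C.e 0)) := by
      intro m
      induction m with
      | zero => norm_num
      | succ m ih =>
        have hcast : ((m + 1 : ℕ) : ZMod C.n) = ((m : ℕ) : ZMod C.n) + 1 := by
          push_cast; ring
        rw [hcast, hstepty]
        exact ih
    intro i
    have := hnat i.val
    rwa [ZMod.natCast_rightInverse i] at this
  refine ⟨hcardHV, ?_, ?_, ?_⟩
  · -- part 2 : structure of the cycle
    rcases hcyc4 0 with hT | hT | hT | hT
    · refine ⟨{Fld.B, Fld.A, Fld.A}, {Fld.A, Fld.B}, Or.inl ⟨rfl, rfl⟩, fun i => ?_⟩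
      have hTi : D.labels (D.vtx (C.e i)) = {Fld.B, Fld.A, Fld.A} :=
        (hall0 i).trans hT
      obtain ⟨hedge, hthird⟩ :=
        D.cycle_struct_t1 C (fun j => (hall0 j).trans hT) hpartB hpartA i
      refine ⟨hTi, ?_, hthird⟩
      rcases hedge with ⟨h1, h2⟩ | ⟨h1, h2⟩ <;> rw [h1, h2] <;> decide
    · refine ⟨{Fld.A, Fld.psi, Fld.chibar}, {Fld.chibar, Fld.psi},
        Or.inr (Or.inr (Or.inl ⟨rfl, rfl⟩)), fun i => ?_⟩
      have hTi := (hall0 i).trans hT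
      obtain ⟨hm, _, _, hthird⟩ := hferm3 i hTi
      refine ⟨hTi, ?_, hthird⟩
      rcases hm with ⟨h1, h2⟩ | ⟨h1, h2⟩ <;> rw [h1, h2] <;> decide
    · refine ⟨{Fld.A, Fld.cbar, Fld.c}, {Fld.c, Fld.cbar},
        Or.inr (Or.inl ⟨rfl, rfl⟩), fun i => ?_⟩
      have hTi := (hall0 i).trans hT
      obtain ⟨hm, _, _, hthird⟩ := hferm4 i hTi
      refine ⟨hTi, ?_, hthird⟩
      rcases hm with ⟨h1, h2⟩ | ⟨h1, h2⟩ <;> rw [h1, h2] <;> decide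
    · refine ⟨{Fld.A, Fld.phibar, Fld.phi}, {Fld.phi, Fld.phibar},
        Or.inr (Or.inr (Or.inr ⟨rfl, rfl⟩)), fun i => ?_⟩
      have hTi := (hall0 i).trans hT
      obtain ⟨hm, _, _, hthird⟩ := hferm5 i hTi
      refine ⟨hTi, ?_, hthird⟩
      rcases hm with ⟨h1, h2⟩ | ⟨h1, h2⟩ <;> rw [h1, h2] <;> decide
  · -- part 3 : off-cycle vertices
    intro v hoff
    rcases hclass v with (hM | hM | hM | hM) | ⟨h₀, hfib, hl₀⟩
    · exact Or.inl hM
    · exfalso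
      obtain ⟨h, hmem, hlab⟩ := exists_of_mem_labels
        (show Fld.psi ∈ D.labels v by rw [hM]; decide)
      obtain ⟨i, hi⟩ := hon_psi h (Or.inl hlab)
      rcases hi with hi | hi
      · exact hoff i (by rw [hi]; exact mem_fiber.1 hmem)
      · apply hoff (i + 1)
        rw [← C.step i, hi, D.mu_invol]
        exact mem_fiber.1 hmem
    · exfalso
      obtain ⟨h, hmem, hlab⟩ := exists_of_mem_labels
        (show Fld.c ∈ D.labels v by rw [hM]; decide)
      obtain ⟨i, hi⟩ := hon_c h (Or.inl hlab)
      rcases hi with hi | hi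
      · exact hoff i (by rw [hi]; exact mem_fiber.1 hmem)
      · apply hoff (i + 1)
        rw [← C.step i, hi, D.mu_invol]
        exact mem_fiber.1 hmem
    · exfalso
      obtain ⟨h, hmem, hlab⟩ := exists_of_mem_labels
        (show Fld.phi ∈ D.labels v by rw [hM]; decide)
      obtain ⟨i, hi⟩ := hon_phi h (Or.inl hlab)
      rcases hi with hi | hi
      · exact hoff i (by rw [hi]; exact mem_fiber.1 hmem)
      · apply hoff (i + 1)
        rw [← C.step i, hi, D.mu_invol]
        exact mem_fiber.1 hmem
    · exact Or.inr ⟨h₀, hfib, hl₀⟩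
  · -- part 4 : off-cycle edges
    intro h hoff
    have hp := D.prop_ok h
    have hkey := (show ∀ a b : Fld, ({a, b} : Multiset Fld) ∈ propTypes →
        (a = Fld.c ∨ a = Fld.cbar) ∨ (a = Fld.psi ∨ a = Fld.chibar) ∨
        (a = Fld.phi ∨ a = Fld.phibar) ∨ a = Fld.etabar ∨
        ({a, b} : Multiset Fld) = {Fld.A, Fld.B} ∨
        ({a, b} : Multiset Fld) = {Fld.A, Fld.b} by decide)
      (D.lab h) (D.lab (D.mu h)) hp
    rcases hkey with hc | hps | hph | he | hAB | hAb
    · exfalso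
      obtain ⟨i, hi⟩ := hon_c h hc
      rcases hi with hi | hi
      · exact (hoff i).1 hi
      · exact (hoff i).2 hi
    · exfalso
      obtain ⟨i, hi⟩ := hon_psi h hps
      rcases hi with hi | hi
      · exact (hoff i).1 hi
      · exact (hoff i).2 hi
    · exfalso
      obtain ⟨i, hi⟩ := hon_phi h hph
      rcases hi with hi | hi
      · exact (hoff i).1 hi
      · exact (hoff i).2 hi
    · exact absurd he (hno_eta h)
    · exact Or.inl hAB
    · exact Or.inr hAb

end Diagram

/-- Every connected loop diagram has exactly one independent
cycle (first Betti number `1`, i.e. `#edges = #vertices`, i.e.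
`#half-edges = 2 * #vertices`): it consists of a single cycle whose interaction
vertices are all of one type `T` among `{B,A,A}`, `{A,cbar,c}`, `{A,ψ,χbar}`,
`{A,φbar,φ}` joined by propagators of the corresponding single type, each cycle
vertex carrying exactly one remaining half-edge, which is labeled `A`; these
`A`-legs are completed by (necessarily acyclic, by Betti number `1`) trees of
`{B,A,A}` vertices joined by `{A,B}` propagators — so that every vertex off the
cycle is a `{B,A,A}` interaction vertex or an external vertex labeled `B` or
`b`, and every edge off the cycle is of type `{A,B}` or `{A,b}` — with all
remaining half-edges matched to external vertices labeled `B` or `b`. -/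
theorem loop_diagram_structure (D : Diagram) (hconn : D.Connected)
    (C : D.Cycle) :
    -- first Betti number 1
    Fintype.card D.H = 2 * Fintype.card D.V ∧
    -- the cycle consists of vertices of a single type T joined by propagators
    -- of the corresponding type P, each cycle vertex carrying exactly one
    -- remaining half-edge, labeled A
    (∃ T P : Multiset Fld,
      ((T = {Fld.B, Fld.A, Fld.A} ∧ P = {Fld.A, Fld.B}) ∨
       (T = {Fld.A, Fld.cbar, Fld.c} ∧ P = {Fld.c, Fld.cbar}) ∨
       (T = {Fld.A, Fld.psi, Fld.chibar} ∧ P = {Fld.chibar, Fld.psi}) ∨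
       (T = {Fld.A, Fld.phibar, Fld.phi} ∧ P = {Fld.phi, Fld.phibar})) ∧
      ∀ i, D.labels (D.vtx (C.e i)) = T ∧
        ({D.lab (C.e i), D.lab (D.mu (C.e i))} : Multiset Fld) = P ∧
        ∃ a : D.H, D.fiber (D.vtx (C.e i)) \ {C.e i, D.mu (C.e (i - 1))} = {a}
          ∧ D.lab a = Fld.A) ∧
    -- every vertex off the cycle is a {B,A,A} interaction vertex or an
    -- external vertex labeled B or b
    (∀ v : D.V, (∀ i, D.vtx (C.e i) ≠ v) →
      D.labels v = {Fld.B, Fld.A, Fld.A} ∨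
      ∃ h₀, D.fiber v = {h₀} ∧ (D.lab h₀ = Fld.B ∨ D.lab h₀ = Fld.b)) ∧
    -- every edge off the cycle is an {A,B} propagator (joining {B,A,A} tree
    -- vertices) or an {A,b} propagator (hence, by the above, with its b-end
    -- at an external vertex)
    (∀ h : D.H, (∀ i, C.e i ≠ h ∧ C.e i ≠ D.mu h) →
      ({D.lab h, D.lab (D.mu h)} : Multiset Fld) = {Fld.A, Fld.B} ∨
      ({D.lab h, D.lab (D.mu h)} : Multiset Fld) = {Fld.A, Fld.b}) := by
  exact D.loop_structure_aux hconn C
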